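/- For 0 < d < 1/2 and t ≥ 0, the function s ↦ (1/Γ(d+1))·((t−s)₊^d − (−s)₊^d) on ℝ belongs to L²(ℝ). -/

import Mathlib

open MeasureTheory

private lemma measurable_rpow_const_aux (p : ℝ) : Measurable fun x : ℝ => x ^ p := by
  measurability

theorem fractional_kernel_memL2 (d t : ℝ) (hd0 : 0 < d) (hd : d < 1/2) (ht : 0 ≤ t) :
    MemLp (fun s : ℝ =>
      (1 / Real.Gamma (d + 1)) * ((max (t - s) 0) ^ d - (max (-s) 0) ^ d)) 2 volume := by
  have hd0' : d ≠ 0 := ne_of_gt hd0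
  set g : ℝ → ℝ := fun s => (max (t - s) 0) ^ d - (max (-s) 0) ^ d with hgdef
  suffices hG : MemLp g 2 volume by
    exact hG.const_mul _
  -- measurability of g
  have hcont : Continuous g := by
    apply Continuous.sub
    · exact (Real.continuous_rpow_const hd0.le).comp ((continuous_const.sub continuous_id).max continuous_const)
    · exact (Real.continuous_rpow_const hd0.le).comp (continuous_neg.max continuous_const)
  have hmg : AEStronglyMeasurable g volume := hcont.aestronglyMeasurable
  -- g vanishes for s > t
  have hg_zero : ∀ s : ℝ, t < s → g s = 0 := by
    intro s hs
    have h1 : max (t - s) 0 = 0 := max_eq_right (by linarith)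
    have h2 : max (-s) 0 = 0 := max_eq_right (by nlinarith)
    simp [hgdef, h1, h2, Real.zero_rpow hd0']
  -- decomposition
  have hdecomp : g = (Set.Iio (-1:ℝ)).indicator g + (Set.Icc (-1:ℝ) t).indicator g := by
    funext s
    by_cases h1 : s ∈ Set.Iio (-1:ℝ)
    · rw [Pi.add_apply, Set.indicator_of_mem h1, Set.indicator_of_notMem (by simp at h1 ⊢; intro h; linarith), add_zero]
    · by_cases h2 : s ≤ t
      · rw [Pi.add_apply, Set.indicator_of_notMem (by simpa using h1),
          Set.indicator_of_mem (Set.mem_Icc.mpr ⟨by simp at h1; linarith, h2⟩), zero_add]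
      · rw [Pi.add_apply, Set.indicator_of_notMem (by simpa using h1),
          Set.indicator_of_notMem (by simp at h1 ⊢; intro h; linarith), hg_zero s (by linarith), add_zero]
  rw [hdecomp]
  apply MemLp.add
  · -- tail part on Iio (-1)
    -- the dominating function
    set h : ℝ → ℝ := (Set.Iio (-1:ℝ)).indicator (fun s => d * t * (-s) ^ (d-1)) with hhdef
    have hhmeas : AEStronglyMeasurable h volume := by
      have hm1 : Measurable fun s : ℝ => (-s) ^ (d-1) :=
        (measurable_rpow_const_aux (d-1)).comp measurable_neg
      have hm : Measurable fun s : ℝ => d * t * (-s) ^ (d-1) := hm1.const_mul _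
      exact (hm.indicator measurableSet_Iio).aestronglyMeasurable
    have hh : MemLp h 2 volume := by
      rw [memLp_two_iff_integrable_sq hhmeas]
      have heq : (fun s => h s ^ 2) =
          (Set.Iio (-1:ℝ)).indicator (fun s => (d*t)^2 * (-s) ^ (2*d-2)) := by
        funext s
        by_cases hs : s ∈ Set.Iio (-1:ℝ)
        · have hs' := Set.mem_Iio.mp hs
          have hs0 : (0:ℝ) ≤ -s := by linarith
          rw [hhdef, Set.indicator_of_mem hs, Set.indicator_of_mem hs]
          have h2 : ((-s) ^ (d-1)) ^ (2:ℕ) = (-s) ^ (2*d-2) := by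
            rw [← Real.rpow_natCast ((-s) ^ (d-1)) 2, ← Real.rpow_mul hs0]
            congr 1; push_cast; ring
          rw [mul_pow, h2]
        · rw [hhdef, Set.indicator_of_notMem hs, Set.indicator_of_notMem hs]
          norm_num
      rw [heq]
      rw [integrable_indicator_iff measurableSet_Iio]
      apply Integrable.const_mul
      -- transfer from Ioi 1 via negation
      have hbase : IntegrableOn (fun x : ℝ => x ^ (2*d-2)) (Set.Ioi 1) volume :=
        integrableOn_Ioi_rpow_of_lt (by linarith) one_pos
      have h1 : Integrable ((Set.Ioi (1:ℝ)).indicator fun x => x ^ (2*d-2)) volume :=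
        (integrable_indicator_iff measurableSet_Ioi).2 hbase
      have h2 := h1.comp_neg
      have h3 : (fun s : ℝ => (Set.Ioi (1:ℝ)).indicator (fun x => x ^ (2*d-2)) (-s)) =
          (Set.Iio (-1:ℝ)).indicator fun s => (-s) ^ (2*d-2) := by
        funext s
        by_cases hs : s ∈ Set.Iio (-1:ℝ)
        · rw [Set.indicator_of_mem (by simp at hs ⊢; linarith : (-s) ∈ Set.Ioi (1:ℝ)),
            Set.indicator_of_mem hs]
        · rw [Set.indicator_of_notMem (by simp at hs ⊢; linarith),
            Set.indicator_of_notMem hs]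
      rw [h3] at h2
      exact (integrable_indicator_iff measurableSet_Iio).1 h2
    apply hh.mono ((hcont.aestronglyMeasurable).indicator measurableSet_Iio)
    apply Filter.Eventually.of_forall
    intro s
    by_cases hs : s ∈ Set.Iio (-1:ℝ)
    · rw [Set.indicator_of_mem hs, hhdef, Set.indicator_of_mem hs]
      have hs' := Set.mem_Iio.mp hs
      have ha : (0:ℝ) < -s := by linarith
      have h1 : max (t - s) 0 = t - s := max_eq_left (by linarith)
      have h2 : max (-s) 0 = -s := max_eq_left ha.le
      have key : (t - s) ^ d - (-s) ^ d ≤ d * t * (-s) ^ (d-1) := by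
        have hts : t - s = (-s) * (1 + t / (-s)) := by
          rw [mul_add, mul_one, mul_div_cancel₀ _ (ne_of_gt ha)]; ring
        have hdiv : (0:ℝ) ≤ t / (-s) := div_nonneg ht ha.le
        have hb : (0:ℝ) ≤ 1 + t / (-s) := by linarith
        have hrw : (t - s) ^ d = (-s) ^ d * (1 + t / (-s)) ^ d := by
          rw [hts, Real.mul_rpow ha.le hb]
        have hbern : (1 + t / (-s)) ^ d ≤ 1 + d * (t / (-s)) :=
          rpow_one_add_le_one_add_mul_self (by linarith) hd0.le (by linarith)
        have hpow : (-s) ^ (d - 1) = (-s) ^ d / (-s) := by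
          rw [Real.rpow_sub ha, Real.rpow_one]
        have hposd : (0:ℝ) ≤ (-s) ^ d := Real.rpow_nonneg ha.le d
        calc (t - s) ^ d - (-s) ^ d ≤ (-s) ^ d * (1 + d * (t / (-s))) - (-s) ^ d := by
              rw [hrw]; nlinarith
          _ = d * t * ((-s) ^ d / (-s)) := by
              rw [div_eq_mul_inv, div_eq_mul_inv]; ring
          _ = d * t * (-s) ^ (d-1) := by rw [hpow]
      have hge : (0:ℝ) ≤ g s := by
        rw [hgdef]
        simp only [h1, h2, sub_nonneg]
        exact Real.rpow_le_rpow ha.le (by linarith) hd0.le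
      have hrhs : (0:ℝ) ≤ d * t * (-s) ^ (d-1) := by positivity
      rw [Real.norm_eq_abs, Real.norm_eq_abs, abs_of_nonneg hge, abs_of_nonneg hrhs]
      rw [hgdef]; simp only [h1, h2]; exact key
    · rw [Set.indicator_of_notMem hs, hhdef, Set.indicator_of_notMem hs]
  · -- middle part on Icc (-1) t
    have hc : MemLp ((Set.Icc (-1:ℝ) t).indicator fun _ => ((t+1) ^ d + 1 : ℝ)) 2 volume :=
      memLp_indicator_const 2 measurableSet_Icc _ (Or.inr (by
        rw [Real.volume_Icc]; exact ENNReal.ofReal_ne_top))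
    apply hc.mono ((hcont.aestronglyMeasurable).indicator measurableSet_Icc)
    apply Filter.Eventually.of_forall
    intro s
    by_cases hs : s ∈ Set.Icc (-1:ℝ) t
    · rw [Set.indicator_of_mem hs, Set.indicator_of_mem hs]
      obtain ⟨hs1, hs2⟩ := hs
      have hA : (max (t - s) 0) ^ d ≤ (t+1) ^ d := by
        apply Real.rpow_le_rpow (le_max_right _ _) _ hd0.le
        apply max_le (by linarith) (by linarith)
      have hB : (max (-s) 0) ^ d ≤ 1 := by
        apply Real.rpow_le_one (le_max_right _ _) _ hd0.le
        apply max_le (by linarith) (by linarith)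
      have hAnn : (0:ℝ) ≤ (max (t - s) 0) ^ d := Real.rpow_nonneg (le_max_right _ _) d
      have hBnn : (0:ℝ) ≤ (max (-s) 0) ^ d := Real.rpow_nonneg (le_max_right _ _) d
      have hC : (0:ℝ) ≤ (t+1) ^ d + 1 := by positivity
      rw [Real.norm_eq_abs, Real.norm_eq_abs, abs_of_nonneg hC, hgdef]
      have := abs_sub ((max (t - s) 0) ^ d) ((max (-s) 0) ^ d)
      calc |(max (t - s) 0) ^ d - (max (-s) 0) ^ d|
          ≤ |(max (t - s) 0) ^ d| + |(max (-s) 0) ^ d| := abs_sub _ _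
        _ = (max (t - s) 0) ^ d + (max (-s) 0) ^ d := by
            rw [abs_of_nonneg hAnn, abs_of_nonneg hBnn]
        _ ≤ (t+1) ^ d + 1 := add_le_add hA hB
    · rw [Set.indicator_of_notMem hs, Set.indicator_of_notMem hs]
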